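/- Let A ∈ ℝ^{m×n}, b ∈ ℝ^m, λ > 0 and let x̄ minimize x ↦ (1/2)‖Ax − b‖² + λ‖x‖₁. Suppose the equicorrelation set J = {i : |A_i^T(b − Ax̄)| = λ} satisfies: A_J has full column rank. Then x̄ is the unique minimizer. -/
import Mathlib


open Finset

/-- The ℓ1-norm on ℝⁿ. -/
def l1 {n : ℕ} (x : Fin n → ℝ) : ℝ := ∑ i, |x i|


lemma sum_sq_expand {m : ℕ} (a q : Fin m → ℝ) (t : ℝ) :
    ∑ j, (a j + t * q j)^2
      = ∑ j, (a j)^2 + 2*t*(∑ j, q j * a j) + t^2 * (∑ j, (q j)^2) := by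
  rw [Finset.mul_sum, Finset.mul_sum, ← Finset.sum_add_distrib, ← Finset.sum_add_distrib]
  exact Finset.sum_congr rfl fun j _ => by ring

lemma lasso_stationarity {m n : ℕ} (A : Matrix (Fin m) (Fin n) ℝ) (b : Fin m → ℝ)
    (lam : ℝ) (hlam : 0 < lam) (y : Fin n → ℝ)
    (hy : ∀ x : Fin n → ℝ,
      (1/2) * (∑ j, (A.mulVec y j - b j)^2) + lam * l1 y ≤
      (1/2) * (∑ j, (A.mulVec x j - b j)^2) + lam * l1 x)
    (i : Fin n) (hi : y i ≠ 0) :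
    |∑ j, A j i * (b j - A.mulVec y j)| = lam := by
  set g : ℝ := ∑ j, A j i * (A.mulVec y j - b j) with hg
  set s : ℝ := ∑ j, (A j i)^2 with hs
  have hs0 : 0 ≤ s := Finset.sum_nonneg fun j _ => sq_nonneg _
  set σ : ℝ := if 0 < y i then (1:ℝ) else -1 with hσ
  have hyabs : 0 < |y i| := abs_pos.mpr hi
  -- growth inequality
  have hgrow : ∀ t : ℝ, |t| < |y i| → 0 ≤ t * (g + lam * σ) + t^2 * s / 2 := by
    intro t ht
    have habs : |y i + t| - |y i| = σ * t := by
      rcases lt_trichotomy (y i) 0 with h | h | h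
      · have h1 : |y i| = -(y i) := abs_of_neg h
        have h2 : y i + t < 0 := by
          rw [abs_lt] at ht; rw [h1] at ht; linarith [ht.2]
        rw [abs_of_neg h2, h1, hσ, if_neg (by linarith)]; ring
      · exact absurd h hi
      · have h1 : |y i| = y i := abs_of_pos h
        have h2 : 0 < y i + t := by
          rw [abs_lt] at ht; rw [h1] at ht; linarith [ht.1]
        rw [abs_of_pos h2, h1, hσ, if_pos h]; ring
    have hmv : ∀ j, A.mulVec (y + Pi.single i t) j = A.mulVec y j + t * A j i := by
      intro j
      rw [Matrix.mulVec_add]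
      simp [Matrix.mulVec_single, mul_comm]
    have hl1 : l1 (y + Pi.single i t) - l1 y = |y i + t| - |y i| := by
      unfold l1
      rw [← Finset.sum_sub_distrib, Finset.sum_eq_single i]
      · simp
      · intro k _ hk
        simp [Pi.single_eq_of_ne hk]
      · intro h
        exact absurd (Finset.mem_univ i) h
    have hQ : ∑ j, (A.mulVec (y + Pi.single i t) j - b j)^2
        = ∑ j, (A.mulVec y j - b j)^2 + 2*t*g + t^2*s := by
      calc ∑ j, (A.mulVec (y + Pi.single i t) j - b j)^2
          = ∑ j, ((A.mulVec y j - b j) + t * A j i)^2 :=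
            Finset.sum_congr rfl fun j _ => by rw [hmv j]; ring
        _ = ∑ j, (A.mulVec y j - b j)^2 + 2*t*(∑ j, A j i * (A.mulVec y j - b j))
              + t^2 * (∑ j, (A j i)^2) :=
            sum_sq_expand (fun j => A.mulVec y j - b j) (fun j => A j i) t
        _ = ∑ j, (A.mulVec y j - b j)^2 + 2*t*g + t^2*s := by rw [hg, hs]
    have hineq := hy (y + Pi.single i t)
    rw [hQ] at hineq
    have hl1' : l1 (y + Pi.single i t) = l1 y + σ * t := by
      have := habs; linarith
    rw [hl1'] at hineq
    nlinarith [hineq]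
  -- conclude g + lam*σ = 0
  have hc : g + lam * σ = 0 := by
    by_contra hc
    set c : ℝ := g + lam * σ with hcdef
    have hcabs : 0 < |c| := abs_pos.mpr hc
    set ε : ℝ := min (|y i| / 2) (|c| / (s+1)) with hε
    have hε0 : 0 < ε := lt_min (by linarith) (div_pos hcabs (by linarith))
    have hεy : ε < |y i| := lt_of_le_of_lt (min_le_left _ _) (by linarith)
    have h1 := hgrow ε (by rwa [abs_of_pos hε0])
    have h2 := hgrow (-ε) (by rwa [abs_neg, abs_of_pos hε0])
    have hce : |c| * ε ≤ ε^2 * s / 2 := by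
      rcases abs_cases c with ⟨h, _⟩ | ⟨h, _⟩ <;> rw [h] <;> nlinarith
    have hεs : ε * (s+1) ≤ |c| := (le_div_iff₀ (by linarith)).mp (min_le_right _ _)
    nlinarith
  -- finish
  have hsum : ∑ j, A j i * (b j - A.mulVec y j) = -g := by
    rw [hg, ← Finset.sum_neg_distrib]
    exact Finset.sum_congr rfl fun j _ => by ring
  rw [hsum, abs_neg]
  have : g = -(lam * σ) := by linarith
  rw [this, abs_neg, abs_mul, abs_of_pos hlam]
  rcases le_or_gt (y i) 0 with h | h
  · rw [hσ, if_neg (not_lt.mpr h)]; norm_num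
  · rw [hσ, if_pos h]; norm_num

/-- If the columns of A indexed by the equicorrelation set J are linearly independent,
then the LASSO minimizer is unique. -/
theorem lasso_unique_minimizer_of_equicorrelation_rank {m n : ℕ}
    (A : Matrix (Fin m) (Fin n) ℝ) (b : Fin m → ℝ) (lam : ℝ) (hlam : 0 < lam)
    (xbar : Fin n → ℝ)
    (hmin : ∀ x : Fin n → ℝ,
      (1/2) * (∑ j, (A.mulVec xbar j - b j)^2) + lam * l1 xbar ≤
      (1/2) * (∑ j, (A.mulVec x j - b j)^2) + lam * l1 x)
    (hrank : ∀ c : Fin n → ℝ,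
      (∀ i, ¬ (|∑ j, A j i * (b j - A.mulVec xbar j)| = lam) → c i = 0) →
      A.mulVec c = 0 → c = 0) :
    ∀ y : Fin n → ℝ,
      (∀ x : Fin n → ℝ,
        (1/2) * (∑ j, (A.mulVec y j - b j)^2) + lam * l1 y ≤
        (1/2) * (∑ j, (A.mulVec x j - b j)^2) + lam * l1 x) →
      y = xbar := by
  intro y hy
  -- Step 1: both minimizers have the same value of A x
  have huv : A.mulVec y = A.mulVec xbar := by
    set z : Fin n → ℝ := fun k => (xbar k + y k)/2 with hz
    have hAz : ∀ j, A.mulVec z j = (A.mulVec xbar j + A.mulVec y j)/2 := by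
      intro j
      simp only [Matrix.mulVec, dotProduct, hz]
      rw [← Finset.sum_add_distrib, Finset.sum_div]
      exact Finset.sum_congr rfl fun k _ => by ring
    have hQz : ∑ j, (A.mulVec z j - b j)^2
        = (∑ j, (A.mulVec xbar j - b j)^2)/2 + (∑ j, (A.mulVec y j - b j)^2)/2
          - (∑ j, (A.mulVec xbar j - A.mulVec y j)^2)/4 := by
      calc ∑ j, (A.mulVec z j - b j)^2
          = ∑ j, ((A.mulVec xbar j - b j)^2/2 + (A.mulVec y j - b j)^2/2
              - (A.mulVec xbar j - A.mulVec y j)^2/4) :=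
            Finset.sum_congr rfl fun j _ => by rw [hAz j]; ring
        _ = _ := by
            rw [Finset.sum_sub_distrib, Finset.sum_add_distrib,
              ← Finset.sum_div, ← Finset.sum_div, ← Finset.sum_div]
    have hl1z : l1 z ≤ (l1 xbar + l1 y)/2 := by
      unfold l1
      rw [← Finset.sum_add_distrib, Finset.sum_div]
      refine Finset.sum_le_sum fun k _ => ?_
      calc |z k| = |xbar k + y k|/2 := by
            rw [hz]; rw [abs_div]; norm_num
        _ ≤ (|xbar k| + |y k|)/2 := by
            have := abs_add_le (xbar k) (y k); linarith
    have h1 := hmin y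
    have h2 := hy xbar
    have h3 := hmin z
    rw [hQz] at h3
    have h4 : lam * l1 z ≤ lam * ((l1 xbar + l1 y)/2) :=
      mul_le_mul_of_nonneg_left hl1z hlam.le
    have hD : ∑ j, (A.mulVec xbar j - A.mulVec y j)^2 ≤ 0 := by linarith
    have hD0 : ∑ j, (A.mulVec xbar j - A.mulVec y j)^2 = 0 :=
      le_antisymm hD (Finset.sum_nonneg fun j _ => sq_nonneg _)
    funext j
    have := (Finset.sum_eq_zero_iff_of_nonneg
      (fun j _ => sq_nonneg (A.mulVec xbar j - A.mulVec y j))).mp hD0 j (Finset.mem_univ j)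
    have := pow_eq_zero_iff (n := 2) (by norm_num) |>.mp this
    linarith [this]
  -- Step 2: supports in J
  have hyJ : ∀ i, ¬ (|∑ j, A j i * (b j - A.mulVec xbar j)| = lam) → y i = 0 := by
    intro i hJ
    by_contra hi
    exact hJ (by rw [← huv]; exact lasso_stationarity A b lam hlam y hy i hi)
  have hxJ : ∀ i, ¬ (|∑ j, A j i * (b j - A.mulVec xbar j)| = lam) → xbar i = 0 := by
    intro i hJ
    by_contra hi
    exact hJ (lasso_stationarity A b lam hlam xbar hmin i hi)
  -- Step 3: apply rank condition
  have hc := hrank (y - xbar)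
    (fun i hJ => by simp [hyJ i hJ, hxJ i hJ])
    (by rw [Matrix.mulVec_sub, huv, sub_self])
  funext k
  have := congrFun hc k
  simp only [Pi.sub_apply, Pi.zero_apply, sub_eq_zero] at this
  exact this
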